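/- For c₁ ∈ (3/4, 1) and N ≥ 1, the product set Aᴺ = [c₂, c₁]ᴺ is forward invariant under the cascading map F_{c₁}: if each coordinate of a state lies in [c₂, c₁], then after one step of simultaneous iteration by f followed by cascading of excesses, each coordinate again lies in [c₂, c₁]. -/

import Mathlib

open Set Real

noncomputable def f (x : ℝ) : ℝ := 4 * x * (1 - x)

noncomputable def fc (c₁ x : ℝ) : ℝ := min (f x) c₁

/-- Sequential cascading of a list of values with incoming excess `e`:
at each site the value plus the incoming excess is capped at `c₁` and the
surplus is passed on; returns the new list together with the final excess. -/
noncomputable def cascade (c₁ : ℝ) : List ℝ → ℝ → List ℝ × ℝ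
  | [], e => ([], e)
  | y :: ys, e =>
      if y + e ≤ c₁ then
        let r := cascade c₁ ys 0
        ((y + e) :: r.1, r.2)
      else
        let r := cascade c₁ ys (y + e - c₁)
        (c₁ :: r.1, r.2)

/-- The cascading map: apply the logistic map at each site, then cascade. -/
noncomputable def Fmap (c₁ : ℝ) (xs : List ℝ) : List ℝ :=
  (cascade c₁ (xs.map f) 0).1

lemma cascade_mem (c₁ c₂ : ℝ) (h12 : c₂ ≤ c₁) :
    ∀ (ys : List ℝ) (e : ℝ), 0 ≤ e → (∀ y ∈ ys, c₂ ≤ y) →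
    ∀ x ∈ (cascade c₁ ys e).1, x ∈ Set.Icc c₂ c₁ := by
  intro ys
  induction ys with
  | nil => intro e _ _ x hx; simp [cascade] at hx
  | cons y ys ih =>
      intro e he hy x hx
      rw [cascade] at hx
      by_cases h : y + e ≤ c₁
      · simp only [h, if_true] at hx
        rcases List.mem_cons.1 hx with rfl | hx
        · exact ⟨le_trans (hy y List.mem_cons_self) (le_add_of_nonneg_right he), h⟩
        · exact ih 0 le_rfl (fun z hz => hy z (List.mem_cons_of_mem _ hz)) x hx
      · simp only [h, if_false] at hx
        rcases List.mem_cons.1 hx with rfl | hx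
        · exact ⟨h12, le_rfl⟩
        · exact ih (y + e - c₁) (by linarith [not_le.1 h])
            (fun z hz => hy z (List.mem_cons_of_mem _ hz)) x hx

theorem cascading_absorbing_set (c₁ : ℝ) (hc : c₁ ∈ Set.Ioo (3/4 : ℝ) 1)
    (N : ℕ) (hN : 1 ≤ N) (xs : List ℝ) (hlen : xs.length = N)
    (hxs : ∀ x ∈ xs, x ∈ Set.Icc (f c₁) c₁) :
    ∀ x ∈ Fmap c₁ xs, x ∈ Set.Icc (f c₁) c₁ := by
  obtain ⟨h1, h2⟩ := hc
  have h12 : f c₁ ≤ c₁ := by unfold f; nlinarith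
  apply cascade_mem c₁ (f c₁) h12 _ 0 le_rfl
  intro y hy
  rcases List.mem_map.1 hy with ⟨x, hx, rfl⟩
  obtain ⟨hxl, hxr⟩ := hxs x hx
  have hlb : 1 - c₁ ≤ x := by
    have : (1 : ℝ) - c₁ ≤ f c₁ := by unfold f; nlinarith
    linarith
  unfold f at *
  nlinarith [mul_nonneg (sub_nonneg.2 hxr) (by linarith : (0:ℝ) ≤ x + c₁ - 1)]
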